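/- N' is the normalizer of T' in G, and if F ≠ F₂ then N is the normalizer of T in G. -/

import Mathlib

open Matrix CategoryTheory CategoryTheory.Limits Pointwise
open scoped LinearAlgebra.Projectivization

noncomputable section

/-- The projective line over a field `K`, as the projectivization of `K²`. -/
abbrev P1 (K : Type*) [Field K] := ℙ K (Fin 2 → K)

namespace P1

variable {K : Type*} [Field K]

lemma mulVec_ne_zero (g : GL (Fin 2) K) {v : Fin 2 → K} (hv : v ≠ 0) :
    (g : Matrix (Fin 2) (Fin 2) K) *ᵥ v ≠ 0 := by
  intro h
  apply hv
  have h2 := congrArg (fun w => ((g⁻¹ : GL (Fin 2) K) : Matrix (Fin 2) (Fin 2) K) *ᵥ w) h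
  simp only [Matrix.mulVec_mulVec] at h2
  rw [Units.inv_mul, Matrix.one_mulVec, Matrix.mulVec_zero] at h2
  exact h2

/-- The natural action of `GL₂(K)` on the projective line `ℙ¹(K)`. -/
instance : SMul (GL (Fin 2) K) (P1 K) :=
  ⟨fun g x => Projectivization.mk K ((g : Matrix (Fin 2) (Fin 2) K) *ᵥ x.rep)
    (mulVec_ne_zero g x.rep_nonzero)⟩

lemma smul_mk (g : GL (Fin 2) K) (v : Fin 2 → K) (hv : v ≠ 0) :
    g • Projectivization.mk K v hv
      = Projectivization.mk K ((g : Matrix (Fin 2) (Fin 2) K) *ᵥ v) (mulVec_ne_zero g hv) := by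
  show Projectivization.mk K _ _ = _
  rw [Projectivization.mk_eq_mk_iff]
  obtain ⟨a, ha⟩ := Projectivization.exists_smul_eq_mk_rep K v hv
  exact ⟨a, by rw [← ha]; simp [Matrix.mulVec_smul]⟩

instance : MulAction (GL (Fin 2) K) (P1 K) where
  one_smul x := by
    induction x using Projectivization.ind with
    | h v hv => rw [smul_mk]; simp
  mul_smul g h x := by
    induction x using Projectivization.ind with
    | h v hv => rw [smul_mk, smul_mk, smul_mk]; simp only [Units.val_mul, Matrix.mulVec_mulVec]

end P1

section Setup

variable (F : Type*) [Field F] (F' : Type*) [Field F'] [Algebra F F']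

/-- The inclusion `GL₂(F) → GL₂(F')` induced by the inclusion `F ⊆ F'`. -/
def glMap : GL (Fin 2) F →* GL (Fin 2) F' :=
  Matrix.GeneralLinearGroup.map (algebraMap F F')

/-- The scalar matrices, as a homomorphism `Fˣ →* GL₂(F)`. -/
def scalarGL : Fˣ →* GL (Fin 2) F :=
  Units.map (Matrix.scalar (Fin 2)).toMonoidHom

variable {F F'}

/-- The (semilinear) action of a field automorphism `σ ∈ Gal(F'/F)` on `ℙ¹(F')`. -/
def sigmaPt (σ : F' ≃ₐ[F] F') (x : P1 F') : P1 F' :=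
  Projectivization.mk F' (fun i => σ (x.rep i))
    (fun h => x.rep_nonzero (funext fun i => σ.injective (by simpa using congrFun h i)))

variable (F F')

/-- The set of `F`-rational points `ℙ¹(F) ⊆ ℙ¹(F')`. -/
def ratPts : Set (P1 F') :=
  Set.range (fun x : P1 F =>
    Projectivization.mk F' (fun i => algebraMap F F' (x.rep i))
      (fun h => x.rep_nonzero (funext fun i =>
        (algebraMap F F').injective (by simpa using congrFun h i))))

/-- A Borel subgroup of `GL₂(F)`: the stabilizer of a point `∞ ∈ ℙ¹(F)`. -/
def Bsub (xoo : P1 F) : Subgroup (GL (Fin 2) F) :=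
  MulAction.stabilizer (GL (Fin 2) F) xoo

/-- A split maximal torus of `GL₂(F)`: the pointwise stabilizer of `{0, ∞} ⊆ ℙ¹(F)`. -/
def Tsub (x0 xoo : P1 F) : Subgroup (GL (Fin 2) F) :=
  MulAction.stabilizer (GL (Fin 2) F) x0 ⊓ MulAction.stabilizer (GL (Fin 2) F) xoo

/-- The setwise stabilizer of `{0, ∞} ⊆ ℙ¹(F)` in `GL₂(F)`. -/
def Nsub (x0 xoo : P1 F) : Subgroup (GL (Fin 2) F) :=
  MulAction.stabilizer (GL (Fin 2) F) ({x0, xoo} : Set (P1 F))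

/-- A nonsplit maximal torus of `GL₂(F)`: the stabilizer in `GL₂(F)` of a point
`P ∈ ℙ¹(F') ∖ ℙ¹(F)`. -/
def T'sub (P : P1 F') : Subgroup (GL (Fin 2) F) :=
  (MulAction.stabilizer (GL (Fin 2) F') P).comap (glMap F F')

/-- The setwise stabilizer in `GL₂(F)` of the pair `{P, σP}`, for `P ∈ ℙ¹(F') ∖ ℙ¹(F)`. -/
def N'sub (σ : F' ≃ₐ[F] F') (P : P1 F') : Subgroup (GL (Fin 2) F) :=
  (MulAction.stabilizer (GL (Fin 2) F') ({P, sigmaPt σ P} : Set (P1 F'))).comap (glMap F F')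

end Setup


section Aux

open Projectivization

variable {K : Type*} [Field K]

lemma P1.fix_iff (g : GL (Fin 2) K) (v : Fin 2 → K) (hv : v ≠ 0) :
    g • Projectivization.mk K v hv = Projectivization.mk K v hv ↔
      ∃ c : Kˣ, (g : Matrix (Fin 2) (Fin 2) K) *ᵥ v = (c : K) • v := by
  rw [P1.smul_mk, Projectivization.mk_eq_mk_iff]
  constructor
  · rintro ⟨c, hc⟩
    exact ⟨c, by rw [← hc]; simp [Units.smul_def]⟩
  · rintro ⟨c, hc⟩
    exact ⟨c, by rw [hc]; simp [Units.smul_def]⟩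

lemma fix_pair {g : GL (Fin 2) K} {v w : Fin 2 → K} (hv : v ≠ 0) (hw : w ≠ 0)
    (hvw : LinearIndependent K ![v, w]) {a b : K}
    (hab : a ≠ b)
    (hgv : (g : Matrix (Fin 2) (Fin 2) K) *ᵥ v = a • v)
    (hgw : (g : Matrix (Fin 2) (Fin 2) K) *ᵥ w = b • w)
    {x : P1 K} (hx : g • x = x) :
    x = Projectivization.mk K v hv ∨ x = Projectivization.mk K w hw := by
  induction x using Projectivization.ind with
  | h u hu =>
    obtain ⟨c, hc⟩ := (P1.fix_iff g u hu).1 hx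
    have hcard : Fintype.card (Fin 2) = Module.finrank K (Fin 2 → K) := by
      simp [Module.finrank_fin_fun]
    let B := basisOfLinearIndependentOfCardEqFinrank hvw hcard
    have hB0 : B 0 = v := by
      show (⇑B) 0 = v
      rw [coe_basisOfLinearIndependentOfCardEqFinrank]
      simp
    have hB1 : B 1 = w := by
      show (⇑B) 1 = w
      rw [coe_basisOfLinearIndependentOfCardEqFinrank]
      simp
    set α := B.repr u 0 with hα_def
    set β := B.repr u 1 with hβ_def
    have hu' : u = α • v + β • w := by
      have h := B.sum_repr u
      rw [Fin.sum_univ_two, hB0, hB1] at h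
      exact h.symm
    have e1 : (g : Matrix (Fin 2) (Fin 2) K) *ᵥ u = (α * a) • v + (β * b) • w := by
      rw [hu', Matrix.mulVec_add, Matrix.mulVec_smul, Matrix.mulVec_smul, hgv, hgw,
        smul_smul, smul_smul]
    have e2 : (g : Matrix (Fin 2) (Fin 2) K) *ᵥ u = (c * α) • v + (c * β) • w := by
      rw [hc, hu', smul_add, smul_smul, smul_smul]
    have key : (α * a - c * α) • v + (β * b - c * β) • w = 0 := by
      rw [sub_smul, sub_smul, sub_add_sub_comm, ← e1, ← e2, sub_self]
    obtain ⟨h1, h2⟩ := hvw.eq_zero_of_pair key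
    by_cases hα : α = 0
    · right
      have hβ : β ≠ 0 := by
        intro hβ
        exact hu (by rw [hu', hα, hβ, zero_smul, zero_smul, add_zero])
      rw [Projectivization.mk_eq_mk_iff]
      refine ⟨Units.mk0 β hβ, ?_⟩
      rw [hu', hα, zero_smul, zero_add]
      simp [Units.smul_def]
    · have ha : a = c := by
        have h1' : α * a = c * α := sub_eq_zero.mp h1
        apply mul_left_cancel₀ hα
        rw [h1', mul_comm]
      by_cases hβ : β = 0
      · left
        rw [Projectivization.mk_eq_mk_iff]
        refine ⟨Units.mk0 α hα, ?_⟩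
        rw [hu', hβ, zero_smul, add_zero]
        simp [Units.smul_def]
      · exfalso
        have hb : b = c := by
          have h2' : β * b = c * β := sub_eq_zero.mp h2
          apply mul_left_cancel₀ hβ
          rw [h2', mul_comm]
        exact hab (ha.trans hb.symm)

lemma li_of_mk_ne {v w : Fin 2 → K} (hv : v ≠ 0) (hw : w ≠ 0)
    (h : Projectivization.mk K v hv ≠ Projectivization.mk K w hw) :
    LinearIndependent K ![v, w] := by
  rw [linearIndependent_fin2]
  constructor
  · simpa using hw
  · intro t ht
    simp only [Matrix.cons_val_one, Matrix.head_cons, Matrix.cons_val_zero] at ht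
    have ht0 : t ≠ 0 := by
      rintro rfl
      rw [zero_smul] at ht
      exact hv ht.symm
    exact h ((Projectivization.mk_eq_mk_iff K v w hv hw).2
      ⟨Units.mk0 t ht0, by simpa [Units.smul_def] using ht⟩)

lemma exists_gl_eigen (v w : Fin 2 → K) (hvw : LinearIndependent K ![v, w]) (a b : Kˣ) :
    ∃ g : GL (Fin 2) K,
      (g : Matrix (Fin 2) (Fin 2) K) *ᵥ v = (a : K) • v ∧
      (g : Matrix (Fin 2) (Fin 2) K) *ᵥ w = (b : K) • w := by
  have hcard : Fintype.card (Fin 2) = Module.finrank K (Fin 2 → K) := by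
    simp [Module.finrank_fin_fun]
  let B := basisOfLinearIndependentOfCardEqFinrank hvw hcard
  have hB0 : B 0 = v := by
    show (⇑B) 0 = v
    rw [coe_basisOfLinearIndependentOfCardEqFinrank]
    simp
  have hB1 : B 1 = w := by
    show (⇑B) 1 = w
    rw [coe_basisOfLinearIndependentOfCardEqFinrank]
    simp
  let d : Fin 2 → Kˣ := ![a, b]
  let f : (Fin 2 → K) →ₗ[K] (Fin 2 → K) := B.constr K fun i => (d i : K) • B i
  let f' : (Fin 2 → K) →ₗ[K] (Fin 2 → K) := B.constr K fun i => ((d i)⁻¹ : Kˣ) • B i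
  have hff' : f ∘ₗ f' = LinearMap.id := by
    apply B.ext
    intro i
    simp [f, f', Module.Basis.constr_basis, Units.smul_def, smul_smul]
  have hf'f : f' ∘ₗ f = LinearMap.id := by
    apply B.ext
    intro i
    simp [f, f', Module.Basis.constr_basis, Units.smul_def, smul_smul]
  refine ⟨⟨LinearMap.toMatrix' f, LinearMap.toMatrix' f', ?_, ?_⟩, ?_, ?_⟩
  · rw [← LinearMap.toMatrix'_comp, hff', LinearMap.toMatrix'_id]
  · rw [← LinearMap.toMatrix'_comp, hf'f, LinearMap.toMatrix'_id]
  · show (LinearMap.toMatrix' f) *ᵥ v = _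
    rw [← Matrix.toLin'_apply, Matrix.toLin'_toMatrix', ← hB0]
    show (B.constr K fun i => (d i : K) • B i) (B 0) = _
    rw [Module.Basis.constr_basis, hB0]
    simp [d]
  · show (LinearMap.toMatrix' f) *ᵥ w = _
    rw [← Matrix.toLin'_apply, Matrix.toLin'_toMatrix', ← hB1]
    show (B.constr K fun i => (d i : K) • B i) (B 1) = _
    rw [Module.Basis.constr_basis, hB1]
    simp [d]

lemma smul_pair_mem {G X : Type*} [Group G] [MulAction G X] {g : G} {p q : X}
    (hpq : p ≠ q) (h1 : g • p ∈ ({p, q} : Set X)) (h2 : g • q ∈ ({p, q} : Set X)) :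
    g ∈ MulAction.stabilizer G ({p, q} : Set X) := by
  rw [MulAction.mem_stabilizer_iff]
  have hset : g • ({p, q} : Set X) = {g • p, g • q} := by
    rw [Set.smul_set_insert, Set.smul_set_singleton]
  rw [hset]
  rcases h1 with h1 | h1 <;> rcases h2 with h2 | h2
  · exfalso
    exact hpq (smul_left_cancel_iff g |>.1 (by rw [h1, h2]))
  · simp only [Set.mem_singleton_iff] at h2
    rw [h1, h2]
  · simp only [Set.mem_singleton_iff] at h1
    rw [h1, h2]
    exact Set.pair_comm q p
  · simp only [Set.mem_singleton_iff] at h1 h2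
    exfalso
    exact hpq (smul_left_cancel_iff g |>.1 (by rw [h1, h2]))

lemma smul_mem_of_mem_pair_stab {G X : Type*} [Group G] [MulAction G X] {g : G} {p q : X}
    (h : g ∈ MulAction.stabilizer G ({p, q} : Set X)) {x : X} (hx : x ∈ ({p, q} : Set X)) :
    g • x ∈ ({p, q} : Set X) := by
  rw [MulAction.mem_stabilizer_iff] at h
  rw [← h]
  exact Set.smul_mem_smul_set hx

end Aux

section Aux2

open Projectivization

variable {F : Type*} [Field F] {F' : Type*} [Field F'] [Algebra F F']

lemma sigma_comp_ne_zero (σ : F' ≃ₐ[F] F') {u : Fin 2 → F'} (hu : u ≠ 0) :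
    (fun i => σ (u i)) ≠ 0 :=
  fun h => hu (funext fun i => σ.injective (by simpa using congrFun h i))

lemma sigmaPt_mk (σ : F' ≃ₐ[F] F') (u : Fin 2 → F') (hu : u ≠ 0) :
    sigmaPt σ (Projectivization.mk F' u hu)
      = Projectivization.mk F' (fun i => σ (u i)) (sigma_comp_ne_zero σ hu) := by
  unfold sigmaPt
  rw [Projectivization.mk_eq_mk_iff]
  obtain ⟨c, hc⟩ := Projectivization.exists_smul_eq_mk_rep F' u hu
  refine ⟨Units.map σ.toAlgHom.toRingHom.toMonoidHom c, funext fun i => ?_⟩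
  have h := congrFun hc i
  simp only [Pi.smul_apply, Units.smul_def, smul_eq_mul] at h ⊢
  simp only [Units.coe_map]
  show σ (c : F') * σ (u i) = _
  rw [← _root_.map_mul, h]

lemma algebraMap_comp_ne_zero {w : Fin 2 → F} (hw : w ≠ 0) :
    (fun i => algebraMap F F' (w i)) ≠ 0 :=
  fun h => hw (funext fun i => (algebraMap F F').injective (by simpa using congrFun h i))

lemma glMap_coe (g : GL (Fin 2) F) (i j : Fin 2) :
    ((glMap F F' g : GL (Fin 2) F') : Matrix (Fin 2) (Fin 2) F') i j
      = algebraMap F F' ((g : Matrix (Fin 2) (Fin 2) F) i j) := rfl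

lemma sigmaPt_glMap (σ : F' ≃ₐ[F] F') (g : GL (Fin 2) F) (x : P1 F') :
    sigmaPt σ (glMap F F' g • x) = glMap F F' g • sigmaPt σ x := by
  induction x using Projectivization.ind with
  | h u hu =>
    rw [P1.smul_mk, sigmaPt_mk, sigmaPt_mk, P1.smul_mk]
    have hvec : (fun i => σ ((((glMap F F' g : GL (Fin 2) F') : Matrix (Fin 2) (Fin 2) F') *ᵥ u) i))
        = ((glMap F F' g : GL (Fin 2) F') : Matrix (Fin 2) (Fin 2) F') *ᵥ (fun i => σ (u i)) := by
      funext i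
      simp only [Matrix.mulVec, dotProduct, map_sum, _root_.map_mul, glMap_coe, σ.commutes]
    rw [Projectivization.mk_eq_mk_iff]
    exact ⟨1, by rw [one_smul]; exact hvec.symm⟩

lemma mem_ratPts {w : Fin 2 → F} (hw : w ≠ 0) :
    Projectivization.mk F' (fun i => algebraMap F F' (w i)) (algebraMap_comp_ne_zero hw)
      ∈ ratPts F F' := by
  refine ⟨Projectivization.mk F w hw, ?_⟩
  rw [Projectivization.mk_eq_mk_iff]
  obtain ⟨c, hc⟩ := Projectivization.exists_smul_eq_mk_rep F w hw
  refine ⟨Units.map (algebraMap F F').toMonoidHom c, funext fun i => ?_⟩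
  have h := congrFun hc i
  simp only [Pi.smul_apply, Units.smul_def, smul_eq_mul] at h ⊢
  simp only [Units.coe_map, RingHom.toMonoidHom_eq_coe, MonoidHom.coe_coe]
  rw [← _root_.map_mul, h]

lemma li_one_z {z : F'} (hz : ∀ r : F, z ≠ algebraMap F F' r) :
    LinearIndependent F ![(1 : F'), z] := by
  have hzne : z ≠ 0 := fun h => hz 0 (by simp [h])
  rw [linearIndependent_fin2]
  refine ⟨by simpa using hzne, fun t ht => ?_⟩
  simp only [Matrix.cons_val_one, Matrix.head_cons, Matrix.cons_val_zero] at ht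
  have ht0 : t ≠ 0 := by
    rintro rfl
    rw [zero_smul] at ht
    exact one_ne_zero ht.symm
  apply hz t⁻¹
  rw [map_inv₀]
  rw [Algebra.smul_def] at ht
  exact eq_inv_of_mul_eq_one_right ht

lemma exists_quadratic (hdim : Module.finrank F F' = 2) {z : F'}
    (hz : ∀ r : F, z ≠ algebraMap F F' r) :
    ∃ c d : F, z * z = algebraMap F F' c + algebraMap F F' d * z ∧ c ≠ 0 := by
  have hzne : z ≠ 0 := fun h => hz 0 (by simp [h])
  have : FiniteDimensional F F' := FiniteDimensional.of_finrank_pos (by omega)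
  let B := basisOfLinearIndependentOfCardEqFinrank (li_one_z hz) (by simp [hdim])
  have hB0 : B 0 = 1 := by
    show (⇑B) 0 = 1
    rw [coe_basisOfLinearIndependentOfCardEqFinrank]
    simp
  have hB1 : B 1 = z := by
    show (⇑B) 1 = z
    rw [coe_basisOfLinearIndependentOfCardEqFinrank]
    simp
  have hsum := B.sum_repr (z * z)
  rw [Fin.sum_univ_two, hB0, hB1] at hsum
  refine ⟨B.repr (z * z) 0, B.repr (z * z) 1, ?_, ?_⟩
  · conv_lhs => rw [← hsum]
    rw [Algebra.smul_def, Algebra.smul_def, mul_one]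
  · intro hc0
    rw [hc0, zero_smul, zero_add, Algebra.smul_def] at hsum
    apply hz (B.repr (z * z) 1)
    exact (mul_right_cancel₀ hzne (by rw [hsum])).symm

lemma sigma_fix_eq_refl (hdim : Module.finrank F F' = 2) {z : F'}
    (hz : ∀ r : F, z ≠ algebraMap F F' r) (σ : F' ≃ₐ[F] F') (hσz : σ z = z) :
    σ = (AlgEquiv.refl : F' ≃ₐ[F] F') := by
  have : FiniteDimensional F F' := FiniteDimensional.of_finrank_pos (by omega)
  let B := basisOfLinearIndependentOfCardEqFinrank (li_one_z hz) (by simp [hdim])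
  have hB0 : B 0 = 1 := by
    show (⇑B) 0 = 1
    rw [coe_basisOfLinearIndependentOfCardEqFinrank]
    simp
  have hB1 : B 1 = z := by
    show (⇑B) 1 = z
    rw [coe_basisOfLinearIndependentOfCardEqFinrank]
    simp
  ext y
  have hsum := B.sum_repr y
  rw [Fin.sum_univ_two, hB0, hB1] at hsum
  show σ y = y
  conv_lhs => rw [← hsum]
  conv_rhs => rw [← hsum]
  rw [map_add, _root_.map_smul, _root_.map_smul, _root_.map_one, hσz]

end Aux2

/-- `N'` is the normalizer of `T'` in `G`, and if `F ≠ 𝔽₂` then `N` is the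
normalizer of `T` in `G`. -/
theorem statement13 {F : Type*} [Field F] [Fintype F] {F' : Type*} [Field F'] [Algebra F F']
    (hdim : Module.finrank F F' = 2)
    (σ : F' ≃ₐ[F] F') (hσ : σ ≠ (AlgEquiv.refl : F' ≃ₐ[F] F'))
    (x0 xoo : P1 F) (h0oo : x0 ≠ xoo) (P : P1 F') (hP : P ∉ ratPts F F') :
    N'sub F F' σ P = Subgroup.normalizer (T'sub F F' P : Set (GL (Fin 2) F)) ∧
      (Fintype.card F ≠ 2 → Nsub F x0 xoo = Subgroup.normalizer (Tsub F x0 xoo : Set (GL (Fin 2) F))) := by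
  constructor
  · -- part 1: nonsplit torus
    set Q := sigmaPt σ P with hQ_def
    have hT'mem : ∀ h : GL (Fin 2) F, h ∈ T'sub F F' P ↔ glMap F F' h • P = P := by
      intro h
      rw [T'sub, Subgroup.mem_comap, MulAction.mem_stabilizer_iff]
    have hN'mem : ∀ h : GL (Fin 2) F, h ∈ N'sub F F' σ P ↔
        glMap F F' h ∈ MulAction.stabilizer (GL (Fin 2) F') ({P, Q} : Set (P1 F')) := by
      intro h
      rw [N'sub, Subgroup.mem_comap]
    have hT'Q : ∀ h ∈ T'sub F F' P, glMap F F' h • Q = Q := by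
      intro h hh
      rw [hQ_def, ← sigmaPt_glMap, (hT'mem h).1 hh]
    have hu : P.rep ≠ 0 := P.rep_nonzero
    have hmkP : Projectivization.mk F' P.rep hu = P := P.mk_rep
    have hu0 : P.rep 0 ≠ 0 := by
      intro h0
      apply hP
      have hu1 : P.rep 1 ≠ 0 := by
        intro h1
        apply hu
        funext i
        fin_cases i <;> assumption
      have hwne : (![0, 1] : Fin 2 → F) ≠ 0 := by
        intro h
        simpa using congrFun h 1
      have hPeq : P = Projectivization.mk F' (fun i => algebraMap F F' (![0, 1] i))
          (algebraMap_comp_ne_zero hwne) := by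
        rw [← hmkP, Projectivization.mk_eq_mk_iff]
        refine ⟨Units.mk0 (P.rep 1) hu1, funext fun i => ?_⟩
        fin_cases i <;> simp [Units.smul_def, h0]
      rw [hPeq]
      exact mem_ratPts hwne
    set z : F' := P.rep 1 / P.rep 0 with hz_def
    have hz_u : z * P.rep 0 = P.rep 1 := div_mul_cancel₀ _ hu0
    have hz_irr : ∀ r : F, z ≠ algebraMap F F' r := by
      intro r hr
      apply hP
      have hwne : (![1, r] : Fin 2 → F) ≠ 0 := by
        intro h
        simpa using congrFun h 0
      have hPeq : P = Projectivization.mk F' (fun i => algebraMap F F' (![1, r] i))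
          (algebraMap_comp_ne_zero hwne) := by
        rw [← hmkP, Projectivization.mk_eq_mk_iff]
        refine ⟨Units.mk0 (P.rep 0) hu0, funext fun i => ?_⟩
        fin_cases i
        · simp [Units.smul_def]
        · simp only [Pi.smul_apply, Units.smul_def, smul_eq_mul, Units.val_mk0]
          show P.rep 0 * algebraMap F F' (![1, r] 1) = P.rep 1
          simp only [Matrix.cons_val_one, Matrix.head_cons, Matrix.cons_val_zero]
          rw [← hr, mul_comm, hz_u]
      rw [hPeq]
      exact mem_ratPts hwne
    have hzne : z ≠ 0 := fun h => hz_irr 0 (by simp [h])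
    obtain ⟨c, d, hcd, hc0⟩ := exists_quadratic hdim hz_irr
    have hσzne : σ z ≠ z := fun h => hσ (sigma_fix_eq_refl hdim hz_irr σ h)
    set M : Matrix (Fin 2) (Fin 2) F := !![0, 1; c, d] with hM_def
    have hdet : M.det ≠ 0 := by
      rw [hM_def, Matrix.det_fin_two_of]
      simpa using hc0
    set t0 : GL (Fin 2) F := Matrix.GeneralLinearGroup.mkOfDetNeZero M hdet with ht0_def
    have hMcoe : ∀ i j, ((glMap F F' t0 : GL (Fin 2) F') : Matrix (Fin 2) (Fin 2) F') i j
        = algebraMap F F' (M i j) := fun i j => rfl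
    set w : Fin 2 → F' := fun i => σ (P.rep i) with hw_def
    have hwne : w ≠ 0 := sigma_comp_ne_zero σ hu
    have hmkQ : Projectivization.mk F' w hwne = Q := rfl
    have keyu : algebraMap F F' c * P.rep 0 + algebraMap F F' d * P.rep 1 = z * P.rep 1 := by
      rw [← hz_u]
      calc algebraMap F F' c * P.rep 0 + algebraMap F F' d * (z * P.rep 0)
          = (algebraMap F F' c + algebraMap F F' d * z) * P.rep 0 := by ring
        _ = (z * z) * P.rep 0 := by rw [hcd]
        _ = z * (z * P.rep 0) := by ring
    have keyw : algebraMap F F' c * w 0 + algebraMap F F' d * w 1 = σ z * w 1 := by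
      have h := congrArg σ keyu
      simpa only [map_add, _root_.map_mul, AlgEquiv.commutes, hw_def] using h
    have key0w : w 1 = σ z * w 0 := by
      simp only [hw_def]
      rw [← hz_u, _root_.map_mul]
    have expand : ∀ (N : Matrix (Fin 2) (Fin 2) F') (v : Fin 2 → F') (i : Fin 2),
        (N *ᵥ v) i = N i 0 * v 0 + N i 1 * v 1 := by
      intro N v i
      simp [Matrix.mulVec, dotProduct, Fin.sum_univ_two]
    have ht0u : ((glMap F F' t0 : GL (Fin 2) F') : Matrix (Fin 2) (Fin 2) F') *ᵥ P.rep
        = z • P.rep := by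
      funext i
      rw [expand]
      fin_cases i
      · simpa [hMcoe, hM_def] using hz_u.symm
      · simpa [hMcoe, hM_def] using keyu
    have ht0w : ((glMap F F' t0 : GL (Fin 2) F') : Matrix (Fin 2) (Fin 2) F') *ᵥ w
        = σ z • w := by
      funext i
      rw [expand]
      fin_cases i
      · simpa [hMcoe, hM_def] using key0w
      · simpa [hMcoe, hM_def] using keyw
    have hσzne0 : σ z ≠ 0 := fun h => hzne (σ.injective (by rw [h, map_zero]))
    have ht0P : glMap F F' t0 • P = P := by
      rw [← hmkP]
      exact (P1.fix_iff _ _ _).2 ⟨Units.mk0 z hzne, ht0u⟩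
    have ht0Q : glMap F F' t0 • Q = Q := by
      rw [← hmkQ]
      exact (P1.fix_iff _ _ _).2 ⟨Units.mk0 (σ z) hσzne0, ht0w⟩
    have ht0T' : t0 ∈ T'sub F F' P := (hT'mem t0).2 ht0P
    have hPQ : P ≠ Q := by
      intro h
      rw [← hmkP, ← hmkQ, Projectivization.mk_eq_mk_iff] at h
      obtain ⟨e, he⟩ := h
      have h0 := congrFun he 0
      have h1 := congrFun he 1
      simp only [Pi.smul_apply, Units.smul_def, smul_eq_mul] at h0 h1
      apply hσzne
      apply mul_right_cancel₀ hu0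
      calc σ z * P.rep 0 = σ z * (↑e * w 0) := by rw [h0]
        _ = ↑e * (σ z * w 0) := by ring
        _ = ↑e * w 1 := by rw [key0w]
        _ = P.rep 1 := h1
        _ = z * P.rep 0 := hz_u.symm
    have hli : LinearIndependent F' ![P.rep, w] :=
      li_of_mk_ne hu hwne (by rw [hmkP, hmkQ]; exact hPQ)
    have hfix : ∀ x : P1 F', glMap F F' t0 • x = x → x = P ∨ x = Q := by
      intro x hx
      have h := fix_pair hu hwne hli (Ne.symm hσzne) ht0u ht0w hx
      rwa [hmkP, hmkQ] at h
    have hconj : ∀ k ∈ N'sub F F' σ P, ∀ h ∈ T'sub F F' P,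
        k * h * k⁻¹ ∈ T'sub F F' P := by
      intro k hk h hh
      rw [hT'mem, _root_.map_mul, _root_.map_mul, _root_.map_inv, mul_smul, mul_smul]
      have hkinv : (glMap F F' k)⁻¹ • P ∈ ({P, Q} : Set (P1 F')) := by
        have h4 := smul_mem_of_mem_pair_stab ((hN'mem k⁻¹).1 (inv_mem hk))
          (show P ∈ ({P, Q} : Set (P1 F')) from Set.mem_insert _ _)
        rwa [_root_.map_inv] at h4
      have hfixH : glMap F F' h • ((glMap F F' k)⁻¹ • P) = (glMap F F' k)⁻¹ • P := by
        rcases hkinv with h' | h'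
        · rw [h', (hT'mem h).1 hh]
        · rw [Set.mem_singleton_iff] at h'
          rw [h', hT'Q h hh]
      rw [hfixH, smul_inv_smul]
    apply le_antisymm
    · intro g hg
      rw [Subgroup.mem_normalizer_iff]
      intro h
      constructor
      · intro hh
        exact hconj g hg h hh
      · intro hh
        have h2 := hconj g⁻¹ (inv_mem hg) _ hh
        have h3 : g⁻¹ * (g * h * g⁻¹) * g⁻¹⁻¹ = h := by group
        rwa [h3] at h2
    · intro g hg
      rw [Subgroup.mem_normalizer_iff] at hg
      have ht1 : g⁻¹ * t0 * g ∈ T'sub F F' P := by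
        apply (hg (g⁻¹ * t0 * g)).2
        have h3 : g * (g⁻¹ * t0 * g) * g⁻¹ = t0 := by group
        rw [h3]
        exact ht0T'
      rw [hN'mem]
      have hfixgen : ∀ x : P1 F', glMap F F' (g⁻¹ * t0 * g) • x = x →
          glMap F F' t0 • (glMap F F' g • x) = glMap F F' g • x := by
        intro x hx
        rw [_root_.map_mul, _root_.map_mul, _root_.map_inv, mul_smul, mul_smul] at hx
        calc glMap F F' t0 • (glMap F F' g • x)
            = glMap F F' g • ((glMap F F' g)⁻¹ •
                (glMap F F' t0 • (glMap F F' g • x))) := (smul_inv_smul _ _).symm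
          _ = glMap F F' g • x := by rw [hx]
      have hgP : glMap F F' g • P ∈ ({P, Q} : Set (P1 F')) := by
        rcases hfix _ (hfixgen P ((hT'mem _).1 ht1)) with h | h
        · rw [h]; exact Set.mem_insert _ _
        · rw [h]; exact Set.mem_insert_of_mem _ rfl
      have hgQ : glMap F F' g • Q ∈ ({P, Q} : Set (P1 F')) := by
        rcases hfix _ (hfixgen Q (hT'Q _ ht1)) with h | h
        · rw [h]; exact Set.mem_insert _ _
        · rw [h]; exact Set.mem_insert_of_mem _ rfl
      exact smul_pair_mem hPQ hgP hgQ
  · -- part 2: split torus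
    intro hcardF
    classical
    have hcard2 : 1 < Fintype.card F := Fintype.one_lt_card
    have h3 : 3 ≤ Fintype.card F := by omega
    have hexb : ∃ x : F, x ≠ 0 ∧ x ≠ 1 := by
      by_contra hcon
      push_neg at hcon
      have hsub : (Finset.univ : Finset F) ⊆ {0, 1} := by
        intro x _
        rcases eq_or_ne x 0 with h | h
        · simp [h]
        · simp [hcon x h]
      have hcard := Finset.card_le_card hsub
      have hle : ({0, 1} : Finset F).card ≤ 2 :=
        (Finset.card_insert_le _ _).trans (by simp)
      rw [Finset.card_univ] at hcard
      omega
    obtain ⟨bv, hb0, hb1⟩ := hexb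
    set b : Fˣ := Units.mk0 bv hb0 with hb_def
    have hv : x0.rep ≠ 0 := x0.rep_nonzero
    have hw : xoo.rep ≠ 0 := xoo.rep_nonzero
    have hmk0 : Projectivization.mk F x0.rep hv = x0 := x0.mk_rep
    have hmkoo : Projectivization.mk F xoo.rep hw = xoo := xoo.mk_rep
    have hli : LinearIndependent F ![x0.rep, xoo.rep] :=
      li_of_mk_ne hv hw (by rw [hmk0, hmkoo]; exact h0oo)
    obtain ⟨t0, ht0v, ht0w⟩ := exists_gl_eigen x0.rep xoo.rep hli 1 b
    have hab : ((1 : Fˣ) : F) ≠ (b : F) := by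
      simp only [Units.val_one, hb_def, Units.val_mk0]
      exact fun h => hb1 h.symm
    have hTmem : ∀ h : GL (Fin 2) F, h ∈ Tsub F x0 xoo ↔ h • x0 = x0 ∧ h • xoo = xoo := by
      intro h
      rw [Tsub, Subgroup.mem_inf, MulAction.mem_stabilizer_iff, MulAction.mem_stabilizer_iff]
    have ht0P : t0 • x0 = x0 := by
      rw [← hmk0]
      exact (P1.fix_iff _ _ _).2 ⟨1, ht0v⟩
    have ht0Q : t0 • xoo = xoo := by
      rw [← hmkoo]
      exact (P1.fix_iff _ _ _).2 ⟨b, ht0w⟩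
    have ht0T : t0 ∈ Tsub F x0 xoo := (hTmem t0).2 ⟨ht0P, ht0Q⟩
    have hfix : ∀ x : P1 F, t0 • x = x → x = x0 ∨ x = xoo := by
      intro x hx
      have h := fix_pair hv hw hli hab ht0v ht0w hx
      rwa [hmk0, hmkoo] at h
    have hconj : ∀ k ∈ Nsub F x0 xoo, ∀ h ∈ Tsub F x0 xoo,
        k * h * k⁻¹ ∈ Tsub F x0 xoo := by
      intro k hk h hh
      have hfixboth : ∀ y ∈ ({x0, xoo} : Set (P1 F)), h • y = y := by
        intro y hy
        rcases hy with h' | h'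
        · rw [h']; exact ((hTmem h).1 hh).1
        · rw [Set.mem_singleton_iff] at h'
          rw [h']; exact ((hTmem h).1 hh).2
      rw [hTmem]
      constructor
      · have hkinv : k⁻¹ • x0 ∈ ({x0, xoo} : Set (P1 F)) :=
          smul_mem_of_mem_pair_stab (inv_mem hk) (Set.mem_insert _ _)
        rw [mul_smul, mul_smul, hfixboth _ hkinv, smul_inv_smul]
      · have hkinv : k⁻¹ • xoo ∈ ({x0, xoo} : Set (P1 F)) :=
          smul_mem_of_mem_pair_stab (inv_mem hk) (Set.mem_insert_of_mem _ rfl)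
        rw [mul_smul, mul_smul, hfixboth _ hkinv, smul_inv_smul]
    apply le_antisymm
    · intro g hg
      rw [Subgroup.mem_normalizer_iff]
      intro h
      constructor
      · intro hh
        exact hconj g hg h hh
      · intro hh
        have h2 := hconj g⁻¹ (inv_mem hg) _ hh
        have h3 : g⁻¹ * (g * h * g⁻¹) * g⁻¹⁻¹ = h := by group
        rwa [h3] at h2
    · intro g hg
      rw [Subgroup.mem_normalizer_iff] at hg
      have ht1 : g⁻¹ * t0 * g ∈ Tsub F x0 xoo := by
        apply (hg (g⁻¹ * t0 * g)).2
        have h3 : g * (g⁻¹ * t0 * g) * g⁻¹ = t0 := by group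
        rw [h3]
        exact ht0T
      have hfixgen : ∀ x : P1 F, (g⁻¹ * t0 * g) • x = x → t0 • (g • x) = g • x := by
        intro x hx
        rw [mul_smul, mul_smul] at hx
        calc t0 • (g • x) = g • (g⁻¹ • (t0 • (g • x))) := (smul_inv_smul _ _).symm
          _ = g • x := by rw [hx]
      have hgP : g • x0 ∈ ({x0, xoo} : Set (P1 F)) := by
        rcases hfix _ (hfixgen x0 ((hTmem _).1 ht1).1) with h | h
        · rw [h]; exact Set.mem_insert _ _
        · rw [h]; exact Set.mem_insert_of_mem _ rfl
      have hgQ : g • xoo ∈ ({x0, xoo} : Set (P1 F)) := by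
        rcases hfix _ (hfixgen xoo ((hTmem _).1 ht1).2) with h | h
        · rw [h]; exact Set.mem_insert _ _
        · rw [h]; exact Set.mem_insert_of_mem _ rfl
      exact smul_pair_mem h0oo hgP hgQ


end
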